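/- Let R be a local commutative ring with maximal ideal M and let P be a prime ideal of R. Then the product PM is a 1-absorbing primary ideal of R. -/

import Mathlib

def IsOneAbsorbingPrimary {R : Type*} [CommRing R] (I : Ideal R) : Prop :=
  I ≠ ⊤ ∧ ∀ a b c : R, ¬IsUnit a → ¬IsUnit b → ¬IsUnit c →
    a * b * c ∈ I → a * b ∈ I ∨ c ∈ I.radical

theorem oneAbsorbingPrimary_prime_mul_maximalIdeal {R : Type*} [CommRing R]
    [IsLocalRing R] (P : Ideal R) (hP : P.IsPrime) :
    IsOneAbsorbingPrimary (P * IsLocalRing.maximalIdeal R) := by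
  have hPM : P ≤ IsLocalRing.maximalIdeal R :=
    IsLocalRing.le_maximalIdeal hP.ne_top
  have hle : P * IsLocalRing.maximalIdeal R ≤ P := Ideal.mul_le_left
  have hrad : P ≤ (P * IsLocalRing.maximalIdeal R).radical := by
    intro x hx
    have : x * x ∈ P * IsLocalRing.maximalIdeal R :=
      Ideal.mul_mem_mul hx (hPM hx)
    exact ⟨2, by simpa [pow_two] using this⟩
  constructor
  · intro h
    exact hP.ne_top (top_le_iff.mp (h ▸ hle))
  · intro a b c ha hb hc habc
    have habcP : a * b * c ∈ P := hle habc
    rcases hP.mem_or_mem habcP with hab | hcP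
    · rcases hP.mem_or_mem hab with haP | hbP
      · exact Or.inl (Ideal.mul_mem_mul haP ((IsLocalRing.mem_maximalIdeal b).mpr hb))
      · left
        rw [mul_comm a b]
        exact Ideal.mul_mem_mul hbP ((IsLocalRing.mem_maximalIdeal a).mpr ha)
    · exact Or.inr (hrad hcP)
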